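/- For x > 1/2, the upper incomplete gamma function satisfies Γ(3/2, x) < ((2x + 1)/(2x − 1)) · sqrt(x) · e^{−x}. -/

import Mathlib

open MeasureTheory Real

/-- The upper incomplete gamma function `Γ(s, x) = ∫_x^∞ t^(s−1) e^(−t) dt`. -/
noncomputable def upperIncompleteGamma (s x : ℝ) : ℝ :=
  ∫ t in Set.Ioi x, t ^ (s - 1) * Real.exp (-t)

lemma exp_integral_aux {c a : ℝ} (hc : 0 < c) :
    ∫ t in Set.Ioi a, Real.exp (-c * t) = Real.exp (-c * a) / c := by
  have hderiv : ∀ t ∈ Set.Ici a, HasDerivAt (fun t => -Real.exp (-c * t) / c)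
      (Real.exp (-c * t)) t := by
    intro t _
    have := (((hasDerivAt_id t).const_mul (-c)).exp.neg.div_const c)
    simpa [hc.ne', mul_comm, neg_div, mul_div_assoc] using this
  have htend : Filter.Tendsto (fun t => -Real.exp (-c * t) / c) Filter.atTop (nhds 0) := by
    have : Filter.Tendsto (fun t : ℝ => Real.exp (-c * t)) Filter.atTop (nhds 0) :=
      Real.tendsto_exp_atBot.comp (Filter.tendsto_id.const_mul_atTop_of_neg (by linarith))
    simpa using (this.neg.div_const c)
  have := MeasureTheory.integral_Ioi_of_hasDerivAt_of_tendsto' hderiv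
    (exp_neg_integrableOn_Ioi a hc) htend
  rw [this]; ring

/-- For `x > 1/2`, `Γ(3/2, x) < ((2x + 1)/(2x − 1)) * sqrt x * exp (−x)`. -/
theorem upperIncompleteGamma_three_halves_lt
    (x : ℝ) (hx : 1 / 2 < x) :
    upperIncompleteGamma (3 / 2) x
      < ((2 * x + 1) / (2 * x - 1)) * Real.sqrt x * Real.exp (-x) := by
  have hx0 : 0 < x := by linarith
  set c : ℝ := (2 * x - 1) / (2 * x) with hc_def
  have hc : 0 < c := div_pos (by linarith) (by positivity)
  have hK : (0:ℝ) < Real.sqrt x * Real.exp (-x) * Real.exp (c * x) := by positivity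
  set K : ℝ := Real.sqrt x * Real.exp (-x) * Real.exp (c * x) with hK_def
  -- pointwise bound
  have hbound : ∀ t ∈ Set.Ioi x, t ^ ((3:ℝ)/2 - 1) * Real.exp (-t) ≤ K * Real.exp (-c * t) := by
    intro t ht
    have htx : x < t := ht
    have ht0 : 0 < t := lt_trans hx0 htx
    have hlog : Real.log (t / x) ≤ t / x - 1 := Real.log_le_sub_one_of_pos (by positivity)
    have hlog2 : Real.log t - Real.log x ≤ (t - x) / x := by
      rw [← Real.log_div ht0.ne' hx0.ne'] at *
      rw [sub_div, div_self hx0.ne'] at *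
      linarith
    have h1 : t ^ ((3:ℝ)/2 - 1) = Real.exp (Real.log t * (1/2)) := by
      norm_num
      rw [Real.rpow_def_of_pos ht0]
    have h2 : Real.sqrt x = Real.exp (Real.log x * (1/2)) := by
      rw [Real.sqrt_eq_rpow, Real.rpow_def_of_pos hx0]
    rw [hK_def, h1, h2, ← Real.exp_add, ← Real.exp_add, ← Real.exp_add, ← Real.exp_add]
    apply Real.exp_le_exp.2
    have h3 : (t - x) / (2 * x) = ((t - x) / x) / 2 := by
      rw [div_div, mul_comm]
    have : Real.log t * (1/2) - Real.log x * (1/2) ≤ (t - x) / (2 * x) := by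
      rw [h3]; linarith
    have hcx : -x + c * x + -c * t = -t + (t - x) / (2 * x) := by
      rw [hc_def]
      field_simp
      ring
    linarith [hcx]
  have hf_int : IntegrableOn (fun t : ℝ => t ^ ((3:ℝ)/2 - 1) * Real.exp (-t)) (Set.Ioi x) := by
    have := (Real.GammaIntegral_convergent (s := 3/2) (by norm_num)).mono_set
      (Set.Ioi_subset_Ioi hx0.le)
    exact this.congr_fun (fun t _ => mul_comm _ _) measurableSet_Ioi
  have hg_int : IntegrableOn (fun t : ℝ => K * Real.exp (-c * t)) (Set.Ioi x) :=
    (exp_neg_integrableOn_Ioi x hc).const_mul K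
  have hle : upperIncompleteGamma (3/2) x ≤ K * (Real.exp (-c * x) / c) := by
    have h1 : upperIncompleteGamma (3/2) x ≤ ∫ t in Set.Ioi x, K * Real.exp (-c * t) :=
      setIntegral_mono_on hf_int hg_int measurableSet_Ioi hbound
    rw [MeasureTheory.integral_const_mul, exp_integral_aux hc] at h1
    exact h1
  have hval : K * (Real.exp (-c * x) / c) = Real.sqrt x * Real.exp (-x) * (1 / c) := by
    rw [hK_def]
    rw [div_eq_mul_one_div, ← mul_assoc, mul_assoc _ (Real.exp (c * x)) _,
      ← Real.exp_add]
    ring_nf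
    rw [Real.exp_zero, mul_one]
  have hpos : 0 < Real.sqrt x * Real.exp (-x) := by positivity
  have hclt : 1 / c < (2 * x + 1) / (2 * x - 1) := by
    rw [hc_def, one_div_div]
    gcongr
    · linarith
    · linarith
  calc upperIncompleteGamma (3/2) x ≤ K * (Real.exp (-c * x) / c) := hle
    _ = Real.sqrt x * Real.exp (-x) * (1 / c) := hval
    _ < Real.sqrt x * Real.exp (-x) * ((2 * x + 1) / (2 * x - 1)) :=
        mul_lt_mul_of_pos_left hclt hpos
    _ = ((2 * x + 1) / (2 * x - 1)) * Real.sqrt x * Real.exp (-x) := by ring
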